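/- arXiv:2412.14757 — 4 statements merged into one kernel-verified Lean document; each statement's English description precedes it below -/
import Mathlib

section
/- Tightness of the ⌊|V_S|/2⌋ shot bound (Theorem 2, tightness part): For every k ≥ 1, consider the distribution instance in which G_N consists of two nodes u, v joined by a single channel of width W_c = 1, the graph state G_S is a perfect matching on 2k vertices s_1, …, s_k, t_1, …, t_k with edge set exactly {s_i t_i : 1 ≤ i ≤ k} (k disjoint Bell pairs), and α_D(s_i) = u, α_D(t_i) = v for all i. Then every valid N-shot Bell pair strategy for this instance satisfies N ≥ k = ⌊|V_S|/2⌋. -/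
/-- A one-shot Bell pair strategy on the network `(G_N, W_c)` for a graph state with
vertex type `V_S`: it assigns to each oriented channel `(u,v)` and each graph-state
vertex `s` a value in `{-1, 0, 1}`, antisymmetrically in the orientation, vanishing off
the channels of the network, and such that each channel `e` is used at most `W_c e`
times in total. -/
structure OneShotStrategy (V_N V_S : Type*) [Fintype V_S]
    (G_N : SimpleGraph V_N) (W_c : Sym2 V_N → ℕ) where
  b : V_N → V_N → V_S → ℤ
  antisymm : ∀ u v s, b u v s = - b v u s
  bounded : ∀ u v s, |b u v s| ≤ 1
  supported : ∀ u v, ¬ G_N.Adj u v → ∀ s, b u v s = 0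
  capacity : ∀ u v, G_N.Adj u v →
    (∑ s : V_S, |b u v s|) ≤ (W_c (Sym2.mk u v) : ℤ)

/-- The reachable set of the graph-state vertex `s` under the `N`-shot strategy `bs`:
the smallest set of network nodes containing the assigned node `αD s` and closed under
following, from a reached node `u`, any positively-assigned oriented channel `(u,v)` of
any of the one-shot strategies in `bs`. -/
inductive Reachable {V_N V_S : Type*} [Fintype V_S] {G_N : SimpleGraph V_N}
    {W_c : Sym2 V_N → ℕ} (bs : List (OneShotStrategy V_N V_S G_N W_c))
    (αD : V_S → V_N) (s : V_S) : V_N → Prop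
  | base : Reachable bs αD s (αD s)
  | step {u v : V_N} (bk : OneShotStrategy V_N V_S G_N W_c) :
      Reachable bs αD s u → bk ∈ bs → 0 < bk.b u v s → Reachable bs αD s v

/-- An `N`-shot strategy `bs` is valid for the instance `(G_N, W_c, G_S, αD)` if for
every edge `s₁s₂` of the graph state the reachable sets of `s₁` and `s₂` intersect. -/
def IsValid {V_N V_S : Type*} [Fintype V_S] {G_N : SimpleGraph V_N}
    {W_c : Sym2 V_N → ℕ} (bs : List (OneShotStrategy V_N V_S G_N W_c))
    (G_S : SimpleGraph V_S) (αD : V_S → V_N) : Prop :=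
  ∀ s₁ s₂, G_S.Adj s₁ s₂ → ∃ n, Reachable bs αD s₁ n ∧ Reachable bs αD s₂ n

lemma reachable_cases {V_N V_S : Type*} [Fintype V_S] {G_N : SimpleGraph V_N}
    {W_c : Sym2 V_N → ℕ} {bs : List (OneShotStrategy V_N V_S G_N W_c)}
    {αD : V_S → V_N} {s : V_S} {n : V_N} (h : Reachable bs αD s n) :
    n = αD s ∨ ∃ bk ∈ bs, ∃ u v, 0 < bk.b u v s := by
  induction h with
  | base => exact Or.inl rfl
  | step bk _ hmem hpos _ => exact Or.inr ⟨bk, hmem, _, _, hpos⟩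

/-- If a one-shot strategy on the two-node width-1 network has a positive value
at vertex `s` on some oriented channel, then `|b 0 1 s| = 1`. -/
lemma abs_eq_one_of_pos {V_S : Type*} [Fintype V_S]
    (bk : OneShotStrategy (Fin 2) V_S ⊤ (fun _ => 1))
    {u v : Fin 2} {s : V_S} (h : 0 < bk.b u v s) :
    1 ≤ |bk.b 0 1 s| := by
  have hne : u ≠ v := by
    intro he
    subst he
    have := bk.antisymm u u s
    omega
  have habs : 1 ≤ |bk.b u v s| := by
    rw [abs_of_pos h]; omega
  have ha := bk.antisymm 0 1 s
  fin_cases u <;> fin_cases v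
  · exact absurd rfl hne
  · exact habs
  · rw [ha, abs_neg]; exact habs
  · exact absurd rfl hne

/-- **Tightness of the `⌊|V_S|/2⌋` shot bound.**  On the network consisting of two
nodes `0, 1 : Fin 2` joined by a single channel of width `1` (the complete graph on
`Fin 2`), distributing the perfect matching `{sᵢtᵢ : 1 ≤ i ≤ k}` on the `2k` vertices
`Fin k ⊕ Fin k` (i.e. `k` disjoint Bell pairs) with `αD (inl i) = 0`, `αD (inr i) = 1`
requires at least `k = ⌊|V_S|/2⌋` shots: every valid strategy has length `≥ k`. -/
theorem matching_requires_k_shots (k : ℕ) (hk : 1 ≤ k)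
    (bs : List (OneShotStrategy (Fin 2) (Fin k ⊕ Fin k) ⊤ (fun _ => 1)))
    (hvalid : IsValid bs
      (SimpleGraph.fromRel fun a b => ∃ i : Fin k, a = Sum.inl i ∧ b = Sum.inr i)
      (Sum.elim (fun _ => (0 : Fin 2)) (fun _ => (1 : Fin 2)))) :
    k ≤ bs.length := by
  -- For each pair i, some shot has a positive value at a vertex of pair i.
  have key : ∀ i : Fin k, ∃ m : Fin bs.length, ∃ s : Fin k ⊕ Fin k,
      (s = Sum.inl i ∨ s = Sum.inr i) ∧ ∃ u v, 0 < (bs.get m).b u v s := by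
    intro i
    have hadj : (SimpleGraph.fromRel fun a b =>
        ∃ j : Fin k, a = Sum.inl j ∧ b = Sum.inr j).Adj (Sum.inl i) (Sum.inr i) := by
      simp [SimpleGraph.fromRel_adj]
    obtain ⟨n, h1, h2⟩ := hvalid _ _ hadj
    have c1 := reachable_cases h1
    have c2 := reachable_cases h2
    simp only [Sum.elim_inl, Sum.elim_inr] at c1 c2
    have : ∃ bk ∈ bs, ∃ s : Fin k ⊕ Fin k,
        (s = Sum.inl i ∨ s = Sum.inr i) ∧ ∃ u v, 0 < bk.b u v s := by
      rcases c1 with h1' | ⟨bk, hmem, u, v, hpos⟩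
      · rcases c2 with h2' | ⟨bk, hmem, u, v, hpos⟩
        · rw [h1'] at h2'; exact absurd h2' (by decide)
        · exact ⟨bk, hmem, Sum.inr i, Or.inr rfl, u, v, hpos⟩
      · exact ⟨bk, hmem, Sum.inl i, Or.inl rfl, u, v, hpos⟩
    obtain ⟨bk, hmem, s, hs, u, v, hpos⟩ := this
    obtain ⟨m, hm⟩ := List.mem_iff_get.mp hmem
    exact ⟨m, s, hs, u, v, hm ▸ hpos⟩
  choose m s hs u v hpos using key
  have hinj : Function.Injective m := by
    intro i j hij
    by_contra hne
    have hsne : s i ≠ s j := by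
      rcases hs i with h | h <;> rcases hs j with h' | h' <;>
        simp [h, h', Sum.inl.injEq, Sum.inr.injEq] <;>
        exact fun he => hne (by exact_mod_cast he)
    have hi := abs_eq_one_of_pos (bs.get (m i)) (hpos i)
    have hj := abs_eq_one_of_pos (bs.get (m j)) (hpos j)
    rw [← hij] at hj
    have hcap := (bs.get (m i)).capacity 0 1 (by simp [SimpleGraph.top_adj])
    have hsum : |(bs.get (m i)).b 0 1 (s i)| + |(bs.get (m i)).b 0 1 (s j)| ≤
        ∑ x : Fin k ⊕ Fin k, |(bs.get (m i)).b 0 1 x| := by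
      refine le_trans (le_of_eq
        (Finset.sum_pair (f := fun x => |(bs.get (m i)).b 0 1 x|) hsne).symm) ?_
      exact Finset.sum_le_sum_of_subset_of_nonneg (Finset.subset_univ _)
        (fun x _ _ => abs_nonneg _)
    simp only [Nat.cast_one] at hcap
    omega
  calc k = Fintype.card (Fin k) := (Fintype.card_fin k).symm
    _ ≤ Fintype.card (Fin bs.length) := Fintype.card_le_of_injective m hinj
    _ = bs.length := Fintype.card_fin _
end

section
/- Any graph state can be distributed in at most |V_S| shots on a connected network (the guarantee of the graph state transfer scheme used as the first step in the proof of Theorem 2): For every distribution instance (G_N, W_c, G_S, α_D) in which G_N is connected and V_N is nonempty, there exists a natural number N ≤ |V_S| and a valid N-shot Bell pair strategy for the instance. -/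
open Classical in
/-- The one-shot strategy moving only `s` along the path `p`. -/
noncomputable def pathStrat {V_N V_S : Type*} [Fintype V_S] {G_N : SimpleGraph V_N}
    (W_c : Sym2 V_N → ℕ) (hW : ∀ e ∈ G_N.edgeSet, 1 ≤ W_c e) (s : V_S)
    {a c : V_N} (p : G_N.Walk a c) (hp : p.IsPath) :
    OneShotStrategy V_N V_S G_N W_c where
  b u v t :=
    if t = s then
      (if (u, v) ∈ p.darts.map SimpleGraph.Dart.toProd then 1
       else if (v, u) ∈ p.darts.map SimpleGraph.Dart.toProd then -1 else 0)
    else 0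
  antisymm := by
    intro u v t
    by_cases ht : t = s
    · simp only [ht, if_pos rfl]
      have hnb : ¬ ((u, v) ∈ p.darts.map SimpleGraph.Dart.toProd ∧
          (v, u) ∈ p.darts.map SimpleGraph.Dart.toProd) := by
        rintro ⟨h1, h2⟩
        obtain ⟨d1, hd1, hd1e⟩ := List.mem_map.1 h1
        obtain ⟨d2, hd2, hd2e⟩ := List.mem_map.1 h2
        have hne : u ≠ v := by
          have := d1.adj
          rw [hd1e] at this
          exact this.ne
        have hedges : p.edges.Nodup := hp.edges_nodup
        have : d1 = d2 := by
          apply List.inj_on_of_nodup_map hedges hd1 hd2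
          simp [SimpleGraph.Dart.edge, hd1e, hd2e, Sym2.eq_swap]
        rw [this, hd2e] at hd1e
        exact hne (by simpa using congrArg Prod.fst hd1e.symm)
      by_cases h1 : (u, v) ∈ p.darts.map SimpleGraph.Dart.toProd <;>
        by_cases h2 : (v, u) ∈ p.darts.map SimpleGraph.Dart.toProd <;>
        simp [h1, h2] at hnb ⊢
    · simp [ht]
  bounded := by
    intro u v t
    by_cases ht : t = s <;>
      by_cases h1 : (u, v) ∈ p.darts.map SimpleGraph.Dart.toProd <;>
      by_cases h2 : (v, u) ∈ p.darts.map SimpleGraph.Dart.toProd <;>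
      simp [ht, h1, h2]
  supported := by
    intro u v hadj t
    have h1 : (u, v) ∉ p.darts.map SimpleGraph.Dart.toProd := by
      intro h
      obtain ⟨d, _, hde⟩ := List.mem_map.1 h
      have := d.adj; rw [hde] at this; exact hadj this
    have h2 : (v, u) ∉ p.darts.map SimpleGraph.Dart.toProd := by
      intro h
      obtain ⟨d, _, hde⟩ := List.mem_map.1 h
      have := d.adj; rw [hde] at this; exact hadj this.symm
    by_cases ht : t = s <;> simp [ht, h1, h2]
  capacity := by
    intro u v hadj
    have hsum : (∑ t : V_S, |if t = s then
        (if (u, v) ∈ p.darts.map SimpleGraph.Dart.toProd then (1:ℤ)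
         else if (v, u) ∈ p.darts.map SimpleGraph.Dart.toProd then -1 else 0)
      else 0|) =
        |if (u, v) ∈ p.darts.map SimpleGraph.Dart.toProd then (1:ℤ)
         else if (v, u) ∈ p.darts.map SimpleGraph.Dart.toProd then -1 else 0| := by
      rw [Finset.sum_eq_single s]
      · simp
      · intro t _ hts; simp [hts]
      · intro h; exact absurd (Finset.mem_univ s) h
    rw [hsum]
    have h1 : (1 : ℤ) ≤ W_c (Sym2.mk u v) := by
      exact_mod_cast hW _ (G_N.mem_edgeSet.2 hadj)
    by_cases h1' : (u, v) ∈ p.darts.map SimpleGraph.Dart.toProd <;>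
      by_cases h2' : (v, u) ∈ p.darts.map SimpleGraph.Dart.toProd <;>
      simp [h1', h2'] <;> omega


lemma reach_along_walk {V_N V_S : Type*} [Fintype V_S] {G_N : SimpleGraph V_N}
    {W_c : Sym2 V_N → ℕ} (bs : List (OneShotStrategy V_N V_S G_N W_c))
    (αD : V_S → V_N) (s : V_S) (bk : OneShotStrategy V_N V_S G_N W_c)
    (hbk : bk ∈ bs) {x y : V_N} (q : G_N.Walk x y)
    (hpos : ∀ d ∈ q.darts, 0 < bk.b d.toProd.1 d.toProd.2 s)
    (hx : Reachable bs αD s x) : Reachable bs αD s y := by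
  induction q with
  | nil => exact hx
  | cons hadj q' ih =>
    rename_i u v _
    have h1 : 0 < bk.b u v s := hpos ⟨(u, v), hadj⟩ (by simp [SimpleGraph.Walk.darts])
    exact ih (fun d hd => hpos d (by simp [hd])) (Reachable.step bk hx hbk h1)

/-- **Any graph state can be distributed in at most `|V_S|` shots on a connected
network** (the guarantee of the graph state transfer scheme). -/
theorem graph_state_transfer_shot_bound {V_N V_S : Type*} [Fintype V_N] [Fintype V_S]
    (G_N : SimpleGraph V_N) (hconn : G_N.Connected)
    (W_c : Sym2 V_N → ℕ) (hW : ∀ e ∈ G_N.edgeSet, 1 ≤ W_c e)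
    (G_S : SimpleGraph V_S) (αD : V_S → V_N) :
    ∃ bs : List (OneShotStrategy V_N V_S G_N W_c),
      bs.length ≤ Fintype.card V_S ∧ IsValid bs G_S αD := by
  classical
  have hne : Nonempty V_N := hconn.nonempty
  obtain ⟨n0⟩ := hne
  -- for each s, a path from αD s to n0
  have hpath : ∀ s : V_S, ∃ p : G_N.Walk (αD s) n0, p.IsPath := by
    intro s
    obtain ⟨w⟩ := hconn.preconnected (αD s) n0
    exact ⟨w.toPath, w.toPath.2⟩
  choose p hp using hpath
  let strat : V_S → OneShotStrategy V_N V_S G_N W_c :=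
    fun s => pathStrat W_c hW s (p s) (hp s)
  let bs := (Finset.univ : Finset V_S).toList.map strat
  have hmem : ∀ s, strat s ∈ bs := fun s =>
    List.mem_map.2 ⟨s, by simp, rfl⟩
  have hreach : ∀ s, Reachable bs αD s n0 := by
    intro s
    refine reach_along_walk bs αD s (strat s) (hmem s) (p s) ?_ Reachable.base
    intro d hd
    have hm : (d.toProd.1, d.toProd.2) ∈ (p s).darts.map SimpleGraph.Dart.toProd :=
      List.mem_map.2 ⟨d, hd, rfl⟩
    simp only [strat, pathStrat, if_pos rfl, hm, if_pos]
    norm_num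
  refine ⟨bs, by simp [bs], fun s₁ s₂ _ => ⟨n0, hreach s₁, hreach s₂⟩⟩
end

section
/- Any star graph state can be one-shot distributed in any connected network (the claim of Equation (9)): Let (G_N, W_c, G_S, α_D) be a distribution instance in which G_N is connected, V_N is nonempty, and G_S is a star graph: there is a center vertex c₀ ∈ V_S such that the edge set of G_S is exactly {c₀ s : s ∈ V_S, s ≠ c₀}. Then there exists a valid one-shot Bell pair strategy b for the instance which moreover assigns all used channels to the center, i.e., b((u,v), s) = 0 for every oriented channel (u,v) and every s ≠ c₀. -/
lemma center_reaches_all {V_N V_S : Type*} [Fintype V_S] {G_N : SimpleGraph V_N}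
    {W_c : Sym2 V_N → ℕ} (hconn : G_N.Connected)
    (B : OneShotStrategy V_N V_S G_N W_c) (αD : V_S → V_N) (c₀ : V_S)
    (hB : ∀ u v, G_N.Adj u v → G_N.dist (αD c₀) u < G_N.dist (αD c₀) v →
      0 < B.b u v c₀) :
    ∀ v, Reachable [B] αD c₀ v := by
  set r := αD c₀ with hr
  set d : V_N → ℕ := fun v => G_N.dist r v with hd
  have main : ∀ n : ℕ, ∀ v : V_N, d v = n → Reachable [B] αD c₀ v := by
    intro n
    induction n using Nat.strong_induction_on with
    | _ n ih =>
      intro v hv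
      rcases Nat.eq_zero_or_pos n with h0 | hpos
      · subst h0
        have : v = r := (hconn.dist_eq_zero_iff.mp hv).symm
        rw [this]; exact Reachable.base
      · obtain ⟨p, hp⟩ := hconn.exists_walk_length_eq_dist r v
        have hq : p.reverse.length = n := by
          rw [SimpleGraph.Walk.length_reverse, hp]; exact hv
        cases hq' : p.reverse with
        | nil =>
          rw [hq'] at hq; simp at hq; omega
        | cons h' q' =>
          rename_i u
          rw [hq'] at hq
          simp only [SimpleGraph.Walk.length_cons] at hq
          have hule : d u ≤ n - 1 := by
            have := SimpleGraph.dist_le q'.reverse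
            rw [SimpleGraph.Walk.length_reverse] at this
            simp only [hd]
            omega
          have hvle : d v ≤ d u + 1 := by
            have htri := hconn.dist_triangle (u := r) (v := u) (w := v)
            have : G_N.dist u v = 1 :=
              SimpleGraph.dist_eq_one_iff_adj.mpr h'.symm
            simp only [hd]
            omega
          have hdu : d u = n - 1 := by omega
          have hlt : d u < d v := by omega
          have hu : Reachable [B] αD c₀ u := ih (n-1) (by omega) u hdu
          exact Reachable.step _ hu (List.mem_singleton.mpr rfl)
            (hB u v h'.symm hlt)
  intro v; exact main (d v) v rfl

/-- **Any star graph state can be one-shot distributed in any connected network**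
(Equation (9)): if `G_S` is a star with center `c₀`, there is a valid one-shot Bell
pair strategy that assigns all used channels to the center, i.e. `b((u,v), s) = 0`
for every `s ≠ c₀`. -/
theorem star_one_shot_distribution {V_N V_S : Type*} [Fintype V_N] [Fintype V_S]
    (G_N : SimpleGraph V_N) (hconn : G_N.Connected)
    (W_c : Sym2 V_N → ℕ) (hW : ∀ e ∈ G_N.edgeSet, 1 ≤ W_c e)
    (G_S : SimpleGraph V_S) (c₀ : V_S)
    (hstar : ∀ s₁ s₂, G_S.Adj s₁ s₂ ↔
      (s₁ = c₀ ∧ s₂ ≠ c₀) ∨ (s₂ = c₀ ∧ s₁ ≠ c₀))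
    (αD : V_S → V_N) :
    ∃ b : OneShotStrategy V_N V_S G_N W_c,
      IsValid [b] G_S αD ∧ ∀ u v s, s ≠ c₀ → b.b u v s = 0 := by
  classical
  set r := αD c₀ with hr
  set d : V_N → ℕ := fun v => G_N.dist r v with hd
  refine ⟨{
    b := fun u v s => if s = c₀ ∧ G_N.Adj u v then
      (if d u < d v then 1 else if d v < d u then -1 else 0) else 0
    antisymm := ?_
    bounded := ?_
    supported := ?_
    capacity := ?_ }, ?_, ?_⟩
  · intro u v s
    by_cases hs : s = c₀ <;> by_cases ha : G_N.Adj u v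
    · have ha' : G_N.Adj v u := ha.symm
      simp only [hs, ha, ha', and_self, if_true, true_and]
      split_ifs <;> omega
    · have ha' : ¬ G_N.Adj v u := fun h => ha h.symm
      simp [hs, ha, ha']
    · simp [hs]
    · simp [hs]
  · intro u v s
    split_ifs <;> simp
  · intro u v ha s; simp [ha]
  · intro u v ha
    calc (∑ s : V_S, |(if s = c₀ ∧ G_N.Adj u v then
            (if d u < d v then 1 else if d v < d u then -1 else 0) else 0 : ℤ)|)
        ≤ ∑ s : V_S, (if s = c₀ then 1 else 0) := by
          apply Finset.sum_le_sum
          intro s _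
          by_cases hs : s = c₀ <;>
            simp only [hs, ha, and_self, if_true, if_false, and_false,
              false_and, abs_zero, le_refl] <;>
            first
              | (split_ifs <;> simp)
              | simp
      _ = 1 := by simp
      _ ≤ (W_c (Sym2.mk u v) : ℤ) := by
          exact_mod_cast hW _ (G_N.mem_edgeSet.mpr ha)
  · -- validity
    intro s₁ s₂ hadj
    have hB : ∀ (u v : V_N), G_N.Adj u v →
        G_N.dist (αD c₀) u < G_N.dist (αD c₀) v →
        (0:ℤ) < if (c₀ = c₀ ∧ G_N.Adj u v) then
          (if d u < d v then 1 else if d v < d u then -1 else 0) else 0 := by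
      intro u v hadj' hlt
      rw [if_pos (And.intro rfl hadj'), if_pos hlt]
      norm_num
    rw [hstar] at hadj
    rcases hadj with ⟨h1, h2⟩ | ⟨h1, h2⟩
    · refine ⟨αD s₂, ?_, Reachable.base⟩
      rw [h1]
      exact center_reaches_all hconn _ αD c₀ hB _
    · refine ⟨αD s₁, Reachable.base, ?_⟩
      rw [h1]
      exact center_reaches_all hconn _ αD c₀ hB _
  · intro u v s hs
    simp [hs]
end

section
/- One-shot distribution of a matching of Bell pairs is equivalent to multi-pair edge-disjoint paths (the correspondence established in the proof of Theorem 1, part 2): Let G be a finite simple graph and let (s_1, t_1), …, (s_k, t_k) be pairs of nodes of G with s_i ≠ t_i. Construct the network G_N with node set V(G) ⊕ (Fin k ⊕ Fin k), whose channels are all edges of G together with, for each i, a channel between a_i := inr(inl i) and s_i and a channel between b_i := inr(inr i) and t_i, all of width 1. Let the graph state G_S have vertex set Fin k ⊕ Fin k with edge set exactly {(inl i)(inr i) : 1 ≤ i ≤ k}, and let α_D(inl i) = a_i and α_D(inr i) = b_i. Then there exists a valid one-shot Bell pair strategy for this instance if and only if G contains paths P_1, …, P_k, where P_i joins s_i to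 t_i, that are pairwise edge-disjoint. -/
/-! ### Auxiliary machinery -/

open Classical in
noncomputable def indP (p : Prop) : ℤ := if p then 1 else 0

lemma indP_pos {p : Prop} (h : p) : indP p = 1 := by simp [indP, h]
lemma indP_neg {p : Prop} (h : ¬ p) : indP p = 0 := by simp [indP, h]

section Generic
variable {V_N V_S : Type*} [Fintype V_S] {G_N : SimpleGraph V_N} {W_c : Sym2 V_N → ℕ}

lemma exists_walk_of_reachable (B : OneShotStrategy V_N V_S G_N W_c) {αD : V_S → V_N}
    {σ : V_S} {n : V_N} (h : Reachable [B] αD σ n) :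
    ∃ w : G_N.Walk (αD σ) n, ∀ d ∈ w.darts, 0 < B.b d.toProd.1 d.toProd.2 σ := by
  induction h with
  | base => exact ⟨SimpleGraph.Walk.nil, by simp⟩
  | @step u v bk _ hmem hpos ih =>
    obtain ⟨w, hw⟩ := ih
    have hbk : bk = B := by simpa using hmem
    subst hbk
    have hadj : G_N.Adj u v := by
      by_contra hne
      have := bk.supported u v hne σ
      omega
    refine ⟨w.concat hadj, ?_⟩
    intro d hd
    rw [SimpleGraph.Walk.darts_concat, List.concat_eq_append, List.mem_append,
      List.mem_singleton] at hd
    rcases hd with hd | hd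
    · exact hw d hd
    · subst hd; exact hpos

lemma abs_eq_abs_of_sym2 (B : OneShotStrategy V_N V_S G_N W_c) {x y : V_N}
    (d : G_N.Dart) (hd : d.edge = Sym2.mk x y) (σ : V_S) :
    |B.b x y σ| = |B.b d.toProd.1 d.toProd.2 σ| := by
  rw [SimpleGraph.Dart.edge, Sym2.eq_iff] at hd
  rcases hd with ⟨h1, h2⟩ | ⟨h1, h2⟩
  · rw [h1, h2]
  · rw [h1, h2, B.antisymm, abs_neg]

lemma sum_abs_le_one' {α : Type*} [Fintype α] {f : α → ℤ} (h1 : ∀ a, |f a| ≤ 1)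
    (h2 : ∀ a a', f a ≠ 0 → f a' ≠ 0 → a = a') : (∑ a, |f a|) ≤ 1 := by
  by_cases hex : ∃ a, f a ≠ 0
  · obtain ⟨a₀, ha₀⟩ := hex
    rw [Finset.sum_eq_single a₀]
    · exact h1 a₀
    · intro a _ hne
      by_contra habs
      exact hne (h2 a a₀ (fun h0 => habs (by simp [h0])) ha₀)
    · simp
  · push_neg at hex
    simp [hex]

lemma two_le_sum_abs {α : Type*} [Fintype α] [DecidableEq α] (f : α → ℤ) {a b c d : α}
    (hab : a ≠ b) (hac : a ≠ c) (had : a ≠ d) (hbc : b ≠ c) (hbd : b ≠ d) (hcd : c ≠ d)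
    (h : 1 ≤ |f a| + |f b|) (h' : 1 ≤ |f c| + |f d|) : 2 ≤ ∑ x, |f x| := by
  have hsub : ({a, b, c, d} : Finset α) ⊆ Finset.univ := Finset.subset_univ _
  have hsum : ∑ x ∈ ({a, b, c, d} : Finset α), |f x| = |f a| + (|f b| + (|f c| + |f d|)) := by
    rw [Finset.sum_insert (by simp [hab, hac, had]),
      Finset.sum_insert (by simp [hbc, hbd]),
      Finset.sum_insert (by simp [hcd]), Finset.sum_singleton]
  have hle : ∑ x ∈ ({a, b, c, d} : Finset α), |f x| ≤ ∑ x, |f x| :=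
    Finset.sum_le_sum_of_subset_of_nonneg hsub (fun x _ _ => abs_nonneg _)
  omega

end Generic

lemma not_rev_dart_of_isPath {V : Type*} {G : SimpleGraph V} {x y : V} {w : G.Walk x y}
    (hw : w.IsPath) {d d' : G.Dart} (hd : d ∈ w.darts) (hd' : d' ∈ w.darts)
    (hrev : d'.toProd = (d.toProd.2, d.toProd.1)) : False := by
  have hnodup := hw.isTrail.edges_nodup
  have hinj := List.inj_on_of_nodup_map (f := SimpleGraph.Dart.edge)
    (l := w.darts) (by rwa [← SimpleGraph.Walk.edges])
  have hedge : d.edge = d'.edge := by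
    rw [SimpleGraph.Dart.edge, SimpleGraph.Dart.edge, hrev, Sym2.eq_swap]
  have : d = d' := hinj hd hd' hedge
  subst this
  have hne : d.toProd.2 ≠ d.toProd.1 := d.adj.symm.ne
  exact hne (congrArg Prod.snd hrev)

section Aux

variable {V : Type*} (G : SimpleGraph V) {k : ℕ} (s t : Fin k → V)

/-- The network graph. -/
def netG : SimpleGraph (V ⊕ (Fin k ⊕ Fin k)) :=
  SimpleGraph.fromRel fun a c =>
    (∃ u v, G.Adj u v ∧ a = Sum.inl u ∧ c = Sum.inl v) ∨
    (∃ i : Fin k, a = Sum.inr (Sum.inl i) ∧ c = Sum.inl (s i)) ∨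
    (∃ i : Fin k, a = Sum.inr (Sum.inr i) ∧ c = Sum.inl (t i))

variable {G s t}

lemma netG_adj_inl_inl {u v : V} : (netG G s t).Adj (Sum.inl u) (Sum.inl v) ↔ G.Adj u v := by
  constructor
  · rintro ⟨hne, h | h⟩ <;>
      rcases h with ⟨u', v', hadj, h1, h2⟩ | ⟨i, h1, h2⟩ | ⟨i, h1, h2⟩ <;>
      first
        | (simp_all; done)
        | (simp_all; exact hadj.symm)
  · intro h
    exact ⟨by simpa using h.ne, Or.inl (Or.inl ⟨u, v, h, rfl, rfl⟩)⟩

lemma netG_adj_a {i : Fin k} {c : V ⊕ (Fin k ⊕ Fin k)}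
    (h : (netG G s t).Adj (Sum.inr (Sum.inl i)) c) : c = Sum.inl (s i) := by
  rcases h with ⟨hne, h | h⟩ <;>
    rcases h with ⟨u', v', hadj, h1, h2⟩ | ⟨j, h1, h2⟩ | ⟨j, h1, h2⟩ <;>
    simp_all

lemma netG_adj_b {i : Fin k} {c : V ⊕ (Fin k ⊕ Fin k)}
    (h : (netG G s t).Adj (Sum.inr (Sum.inr i)) c) : c = Sum.inl (t i) := by
  rcases h with ⟨hne, h | h⟩ <;>
    rcases h with ⟨u', v', hadj, h1, h2⟩ | ⟨j, h1, h2⟩ | ⟨j, h1, h2⟩ <;>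
    simp_all

lemma netG_adj_as {i : Fin k} : (netG G s t).Adj (Sum.inr (Sum.inl i)) (Sum.inl (s i)) :=
  ⟨by simp, Or.inl (Or.inr (Or.inl ⟨i, rfl, rfl⟩))⟩

lemma netG_adj_bt {i : Fin k} : (netG G s t).Adj (Sum.inr (Sum.inr i)) (Sum.inl (t i)) :=
  ⟨by simp, Or.inl (Or.inr (Or.inr ⟨i, rfl, rfl⟩))⟩

lemma extract_G_walk {i : Fin k} {x z : V ⊕ (Fin k ⊕ Fin k)}
    (q : (netG G s t).Walk x z) (hq : q.IsPath) (hz : z = Sum.inr (Sum.inr i)) :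
    ∀ u : V, x = Sum.inl u →
      ∃ w : G.Walk u (t i), ∀ e ∈ w.edges, Sym2.map Sum.inl e ∈ q.edges := by
  induction q with
  | nil => intro u h; rw [hz] at h; simp at h
  | @cons a y _ h p ih =>
    intro u hx
    subst hx
    have hp : p.IsPath := hq.of_cons
    cases y with
    | inl u' =>
      have hadj : G.Adj u u' := netG_adj_inl_inl.mp h
      obtain ⟨w, hw⟩ := ih hp hz u' rfl
      refine ⟨SimpleGraph.Walk.cons hadj w, ?_⟩
      intro e he
      rw [SimpleGraph.Walk.edges_cons] at he ⊢
      rcases List.mem_cons.mp he with rfl | he'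
      · exact List.mem_cons_self
      · exact List.mem_cons_of_mem _ (hw e he')
    | inr yj =>
      cases yj with
      | inl j =>
        exfalso
        have hu : Sum.inl u = Sum.inl (s j) := netG_adj_a h.symm
        cases p with
        | nil => simp at hz
        | cons h' p' =>
          have hz' := netG_adj_a h'
          have hnotmem : Sum.inl u ∉ (SimpleGraph.Walk.cons h' p').support :=
            (List.nodup_cons.mp (by simpa using hq.support_nodup)).1
          apply hnotmem
          rw [SimpleGraph.Walk.support_cons]
          refine List.mem_cons_of_mem _ ?_
          rw [hu, ← hz']
          exact SimpleGraph.Walk.start_mem_support _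
      | inr j =>
        have hu : Sum.inl u = Sum.inl (t j) := netG_adj_b h.symm
        by_cases hj : j = i
        · subst hj hz
          exact ⟨(SimpleGraph.Walk.nil).copy (Sum.inl.inj hu).symm rfl, by simp⟩
        · exfalso
          cases p with
          | nil => exact hj (by simpa using hz)
          | cons h' p' =>
            have hz' := netG_adj_b h'
            have hnotmem : Sum.inl u ∉ (SimpleGraph.Walk.cons h' p').support :=
              (List.nodup_cons.mp (by simpa using hq.support_nodup)).1
            apply hnotmem
            rw [SimpleGraph.Walk.support_cons]
            refine List.mem_cons_of_mem _ ?_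
            rw [hu, ← hz']
            exact SimpleGraph.Walk.start_mem_support _

/-- The oriented relation used by the constructed strategy. -/
def RB (P : ∀ i : Fin k, G.Walk (s i) (t i)) :
    (Fin k ⊕ Fin k) → (V ⊕ (Fin k ⊕ Fin k)) → (V ⊕ (Fin k ⊕ Fin k)) → Prop
  | Sum.inl i, x, y => (x = Sum.inr (Sum.inl i) ∧ y = Sum.inl (s i)) ∨
      ∃ d ∈ (P i).darts, x = Sum.inl d.toProd.1 ∧ y = Sum.inl d.toProd.2
  | Sum.inr i, x, y => x = Sum.inr (Sum.inr i) ∧ y = Sum.inl (t i)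

lemma RB_adj {P : ∀ i : Fin k, G.Walk (s i) (t i)} {σ : Fin k ⊕ Fin k}
    {x y : V ⊕ (Fin k ⊕ Fin k)} (h : RB P σ x y) : (netG G s t).Adj x y := by
  rcases σ with i | i
  · rcases h with ⟨rfl, rfl⟩ | ⟨d, hd, rfl, rfl⟩
    · exact netG_adj_as
    · exact netG_adj_inl_inl.mpr d.adj
  · rcases h with ⟨rfl, rfl⟩
    exact netG_adj_bt

lemma RB_unique {P : ∀ i : Fin k, G.Walk (s i) (t i)}
    (hdisj : ∀ i j, i ≠ j → ∀ e, e ∈ (P i).edges → e ∉ (P j).edges)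
    {σ σ' : Fin k ⊕ Fin k} {x y : V ⊕ (Fin k ⊕ Fin k)}
    (h1 : RB P σ x y ∨ RB P σ y x) (h2 : RB P σ' x y ∨ RB P σ' y x) : σ = σ' := by
  rcases σ with i | i <;> rcases σ' with j | j
  · have key : ∀ τ (_ : RB P (Sum.inl τ) x y ∨ RB P (Sum.inl τ) y x),
        (x = Sum.inr (Sum.inl τ) ∧ y = Sum.inl (s τ)) ∨
        (y = Sum.inr (Sum.inl τ) ∧ x = Sum.inl (s τ)) ∨
        (∃ u v, x = Sum.inl u ∧ y = Sum.inl v ∧ Sym2.mk u v ∈ (P τ).edges) := by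
      intro τ hτ
      rcases hτ with (⟨hx, hy⟩ | ⟨d, hd, hx, hy⟩) | (⟨hy, hx⟩ | ⟨d, hd, hy, hx⟩)
      · exact Or.inl ⟨hx, hy⟩
      · refine Or.inr (Or.inr ⟨d.toProd.1, d.toProd.2, hx, hy, ?_⟩)
        exact List.mem_map_of_mem (f := SimpleGraph.Dart.edge) hd
      · exact Or.inr (Or.inl ⟨hy, hx⟩)
      · refine Or.inr (Or.inr ⟨d.toProd.2, d.toProd.1, hx, hy, ?_⟩)
        rw [Sym2.eq_swap]
        exact List.mem_map_of_mem (f := SimpleGraph.Dart.edge) hd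
    rcases key i h1 with ⟨hx, hy⟩ | ⟨hy, hx⟩ | ⟨u, v, hx, hy, he⟩ <;>
      rcases key j h2 with ⟨hx', hy'⟩ | ⟨hy', hx'⟩ | ⟨u', v', hx', hy', he'⟩
    all_goals first
      | (subst hx hy
         obtain rfl := Sum.inl.inj hx'
         obtain rfl := Sum.inl.inj hy'
         by_contra hne
         exact hdisj i j (fun h => hne (congrArg Sum.inl h)) _ he he')
      | simp_all
  · exfalso
    rcases h2 with ⟨hx, hy⟩ | ⟨hy, hx⟩ <;>
      rcases h1 with (⟨hx1, hy1⟩ | ⟨d, hd, hx1, hy1⟩) | (⟨hy1, hx1⟩ | ⟨d, hd, hy1, hx1⟩) <;>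
      simp_all
  · exfalso
    rcases h1 with ⟨hx, hy⟩ | ⟨hy, hx⟩ <;>
      rcases h2 with (⟨hx1, hy1⟩ | ⟨d, hd, hx1, hy1⟩) | (⟨hy1, hx1⟩ | ⟨d, hd, hy1, hx1⟩) <;>
      simp_all
  · rcases h1 with ⟨hx, hy⟩ | ⟨hy, hx⟩ <;> rcases h2 with ⟨hx', hy'⟩ | ⟨hy', hx'⟩ <;>
      simp_all

/-- The strategy constructed from a family of pairwise edge-disjoint paths. -/
noncomputable def stratB (P : ∀ i : Fin k, G.Walk (s i) (t i))
    (hdisj : ∀ i j, i ≠ j → ∀ e, e ∈ (P i).edges → e ∉ (P j).edges) :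
    OneShotStrategy (V ⊕ (Fin k ⊕ Fin k)) (Fin k ⊕ Fin k) (netG G s t) (fun _ => 1) where
  b := fun x y σ => indP (RB P σ x y) - indP (RB P σ y x)
  antisymm := fun u v σ => by ring
  bounded := fun u v σ => by
    show |indP (RB P σ u v) - indP (RB P σ v u)| ≤ 1
    unfold indP
    split_ifs <;> norm_num
  supported := fun x y hna σ => by
    have h1 : ¬ RB P σ x y := fun h => hna (RB_adj h)
    have h2 : ¬ RB P σ y x := fun h => hna (RB_adj h).symm
    show indP (RB P σ x y) - indP (RB P σ y x) = 0
    rw [indP_neg h1, indP_neg h2, sub_zero]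
  capacity := fun x y _ => by
    have : (∑ σ : Fin k ⊕ Fin k, |indP (RB P σ x y) - indP (RB P σ y x)|) ≤ 1 := by
      apply sum_abs_le_one'
      · intro σ; unfold indP; split_ifs <;> norm_num
      · intro σ σ' hσ hσ'
        have u1 : RB P σ x y ∨ RB P σ y x := by
          by_contra hc
          push_neg at hc
          rw [indP_neg hc.1, indP_neg hc.2, sub_zero] at hσ
          exact hσ rfl
        have u2 : RB P σ' x y ∨ RB P σ' y x := by
          by_contra hc
          push_neg at hc
          rw [indP_neg hc.1, indP_neg hc.2, sub_zero] at hσ'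
          exact hσ' rfl
        exact RB_unique hdisj u1 u2
    simpa using this

variable {P : ∀ i : Fin k, G.Walk (s i) (t i)}
  {hdisj : ∀ i j, i ≠ j → ∀ e, e ∈ (P i).edges → e ∉ (P j).edges}

lemma stratB_pos_as {i : Fin k} :
    0 < (stratB P hdisj).b (Sum.inr (Sum.inl i)) (Sum.inl (s i)) (Sum.inl i) := by
  show 0 < indP _ - indP _
  rw [indP_pos (p := RB P (Sum.inl i) (Sum.inr (Sum.inl i)) (Sum.inl (s i)))
    (Or.inl ⟨rfl, rfl⟩), indP_neg]
  · norm_num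
  · rintro (⟨h, _⟩ | ⟨d, hd, _, h⟩) <;> simp at h

lemma stratB_pos_bt {i : Fin k} :
    0 < (stratB P hdisj).b (Sum.inr (Sum.inr i)) (Sum.inl (t i)) (Sum.inr i) := by
  show 0 < indP _ - indP _
  rw [indP_pos (p := RB P (Sum.inr i) (Sum.inr (Sum.inr i)) (Sum.inl (t i)))
    ⟨rfl, rfl⟩, indP_neg]
  · norm_num
  · rintro ⟨h, _⟩; simp at h

lemma stratB_pos_dart (hP : ∀ i, (P i).IsPath) {i : Fin k} {d : G.Dart}
    (hd : d ∈ (P i).darts) :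
    0 < (stratB P hdisj).b (Sum.inl d.toProd.1) (Sum.inl d.toProd.2) (Sum.inl i) := by
  show 0 < indP _ - indP _
  rw [indP_pos (p := RB P (Sum.inl i) (Sum.inl d.toProd.1) (Sum.inl d.toProd.2))
    (Or.inr ⟨d, hd, rfl, rfl⟩), indP_neg]
  · norm_num
  · rintro (⟨h, _⟩ | ⟨d', hd', h1, h2⟩)
    · simp at h
    · exact not_rev_dart_of_isPath (hP i) hd hd'
        (Prod.ext (Sum.inl.inj h1).symm (Sum.inl.inj h2).symm)

lemma reach_along (B : OneShotStrategy (V ⊕ (Fin k ⊕ Fin k)) (Fin k ⊕ Fin k)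
      (netG G s t) (fun _ => 1)) (σ : Fin k ⊕ Fin k) {x y : V} (w : G.Walk x y)
    (hw : ∀ d ∈ w.darts, 0 < B.b (Sum.inl d.toProd.1) (Sum.inl d.toProd.2) σ)
    (hx : Reachable [B] Sum.inr σ (Sum.inl x)) :
    Reachable [B] Sum.inr σ (Sum.inl y) := by
  induction w with
  | nil => exact hx
  | @cons a c _ h p ih =>
    apply ih (fun d hd => hw d (by simp [SimpleGraph.Walk.darts_cons, hd]))
    exact Reachable.step B hx (by simp)
      (hw ⟨(a, c), h⟩ (by simp [SimpleGraph.Walk.darts_cons]))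

lemma stratB_valid (hP : ∀ i, (P i).IsPath) :
    IsValid [stratB P hdisj]
      (SimpleGraph.fromRel fun a c => ∃ i : Fin k, a = Sum.inl i ∧ c = Sum.inr i)
      Sum.inr := by
  have reach1 : ∀ i : Fin k,
      Reachable [stratB P hdisj] Sum.inr (Sum.inl i) (Sum.inl (t i)) := by
    intro i
    have h1 : Reachable [stratB P hdisj] Sum.inr (Sum.inl i) (Sum.inl (s i)) :=
      Reachable.step (stratB P hdisj) Reachable.base (List.mem_singleton_self _)
        stratB_pos_as
    exact reach_along _ _ (P i) (fun d hd => stratB_pos_dart hP hd) h1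
  have reach2 : ∀ i : Fin k,
      Reachable [stratB P hdisj] Sum.inr (Sum.inr i) (Sum.inl (t i)) :=
    fun i => Reachable.step (stratB P hdisj) Reachable.base (List.mem_singleton_self _)
      stratB_pos_bt
  rintro s₁ s₂ ⟨hne, ⟨i, rfl, rfl⟩ | ⟨i, rfl, rfl⟩⟩
  · exact ⟨Sum.inl (t i), reach1 i, reach2 i⟩
  · exact ⟨Sum.inl (t i), reach2 i, reach1 i⟩

/-- Forward direction: from a valid one-shot strategy, extract edge-disjoint paths. -/
lemma forward_direction
    (B : OneShotStrategy (V ⊕ (Fin k ⊕ Fin k)) (Fin k ⊕ Fin k) (netG G s t) (fun _ => 1))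
    (hB : IsValid [B]
      (SimpleGraph.fromRel fun a c => ∃ i : Fin k, a = Sum.inl i ∧ c = Sum.inr i)
      Sum.inr) :
    ∃ P : ∀ i : Fin k, G.Walk (s i) (t i), (∀ i, (P i).IsPath) ∧
      ∀ i j, i ≠ j → ∀ e, e ∈ (P i).edges → e ∉ (P j).edges := by
  classical
  have H : ∀ i : Fin k, ∃ w : G.Walk (s i) (t i), w.IsPath ∧
      ∀ x y : V, Sym2.mk x y ∈ w.edges →
        1 ≤ |B.b (Sum.inl x) (Sum.inl y) (Sum.inl i)| +
            |B.b (Sum.inl x) (Sum.inl y) (Sum.inr i)| := by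
    intro i
    have hadjS : (SimpleGraph.fromRel fun a c =>
        ∃ i : Fin k, a = Sum.inl i ∧ c = Sum.inr i).Adj
        (Sum.inl i) (Sum.inr i) := ⟨by simp, Or.inl ⟨i, rfl, rfl⟩⟩
    obtain ⟨n, h1, h2⟩ := hB _ _ hadjS
    obtain ⟨w1, hw1⟩ := exists_walk_of_reachable B h1
    obtain ⟨w2, hw2⟩ := exists_walk_of_reachable B h2
    have hcharge : ∀ (x y : V ⊕ (Fin k ⊕ Fin k)),
        Sym2.mk x y ∈ (w1.append w2.reverse).edges →
        1 ≤ |B.b x y (Sum.inl i)| + |B.b x y (Sum.inr i)| := by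
      intro x y he
      rw [SimpleGraph.Walk.edges_append, List.mem_append] at he
      rcases he with he | he
      · obtain ⟨d, hd, hde⟩ := List.mem_map.mp he
        have hpos := hw1 d hd
        have habs : |B.b x y (Sum.inl i)| = |B.b d.toProd.1 d.toProd.2 (Sum.inl i)| :=
          abs_eq_abs_of_sym2 B d hde _
        have hnn := abs_nonneg (B.b x y (Sum.inr i))
        have : 1 ≤ |B.b d.toProd.1 d.toProd.2 (Sum.inl i)| := by
          rw [abs_of_pos hpos]; omega
        omega
      · rw [SimpleGraph.Walk.edges_reverse, List.mem_reverse] at he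
        obtain ⟨d, hd, hde⟩ := List.mem_map.mp he
        have hpos := hw2 d hd
        have habs : |B.b x y (Sum.inr i)| = |B.b d.toProd.1 d.toProd.2 (Sum.inr i)| :=
          abs_eq_abs_of_sym2 B d hde _
        have hnn := abs_nonneg (B.b x y (Sum.inl i))
        have : 1 ≤ |B.b d.toProd.1 d.toProd.2 (Sum.inr i)| := by
          rw [abs_of_pos hpos]; omega
        omega
    set W := w1.append w2.reverse with hWdef
    have hQ0path : W.bypass.IsPath := W.bypass_isPath
    obtain ⟨z, hadj1, Q, hQ⟩ := SimpleGraph.Walk.exists_eq_cons_of_ne (by simp) W.bypass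
    have hz : z = Sum.inl (s i) := netG_adj_a hadj1
    have hQpath : Q.IsPath := by
      rw [hQ] at hQ0path
      exact hQ0path.of_cons
    obtain ⟨w, hw⟩ := extract_G_walk Q hQpath rfl (s i) hz
    refine ⟨w.bypass, w.bypass_isPath, ?_⟩
    intro x y hxy
    have hxy' : Sym2.mk x y ∈ w.edges := w.edges_bypass_subset hxy
    have hmem := hw _ hxy'
    have hmem' : Sym2.mk (Sum.inl x) (Sum.inl y) ∈ Q.edges := by
      simpa using hmem
    apply hcharge
    apply W.edges_bypass_subset
    rw [hQ, SimpleGraph.Walk.edges_cons]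
    exact List.mem_cons_of_mem _ hmem'
  choose P hpath hch using H
  refine ⟨P, hpath, ?_⟩
  intro i j hij e hei hej
  revert hei hej
  induction e using Sym2.ind with
  | _ x y =>
    intro hei hej
    have c1 := hch i x y hei
    have c2 := hch j x y hej
    have hadjG : G.Adj x y := (P i).adj_of_mem_edges hei
    have cap := B.capacity (Sum.inl x) (Sum.inl y) (netG_adj_inl_inl.mpr hadjG)
    have h2 := two_le_sum_abs (fun σ => B.b (Sum.inl x) (Sum.inl y) σ)
      (a := Sum.inl i) (b := Sum.inr i) (c := Sum.inl j) (d := Sum.inr j)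
      (by simp) (by simp [hij]) (by simp) (by simp) (by simp [hij]) (by simp)
      c1 c2
    have cap' : (∑ σ : Fin k ⊕ Fin k, |B.b (Sum.inl x) (Sum.inl y) σ|) ≤ 1 := by
      simpa using cap
    linarith

end Aux

/-- **One-shot distribution of a matching of Bell pairs is equivalent to multi-pair
edge-disjoint paths.**  Given a graph `G` and pairs `(sᵢ, tᵢ)` with `sᵢ ≠ tᵢ`, build
the network on `V ⊕ (Fin k ⊕ Fin k)` whose channels (all of width `1`) are the edges
of `G` together with channels `aᵢ–sᵢ` and `bᵢ–tᵢ`, where `aᵢ = inr (inl i)` and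
`bᵢ = inr (inr i)`; let the graph state be the matching `{(inl i)(inr i)}` on
`Fin k ⊕ Fin k` with `αD = Sum.inr`.  Then a valid one-shot Bell pair strategy exists
iff `G` contains pairwise edge-disjoint paths `Pᵢ` joining `sᵢ` to `tᵢ`. -/
theorem matching_distribution_iff_edge_disjoint_paths {V : Type*} (G : SimpleGraph V)
    (k : ℕ) (s t : Fin k → V) (hst : ∀ i, s i ≠ t i) :
    (∃ b : OneShotStrategy (V ⊕ (Fin k ⊕ Fin k)) (Fin k ⊕ Fin k)
        (SimpleGraph.fromRel fun a c =>
          (∃ u v, G.Adj u v ∧ a = Sum.inl u ∧ c = Sum.inl v) ∨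
          (∃ i : Fin k, a = Sum.inr (Sum.inl i) ∧ c = Sum.inl (s i)) ∨
          (∃ i : Fin k, a = Sum.inr (Sum.inr i) ∧ c = Sum.inl (t i)))
        (fun _ => 1),
      IsValid [b]
        (SimpleGraph.fromRel fun a c => ∃ i : Fin k, a = Sum.inl i ∧ c = Sum.inr i)
        Sum.inr)
    ↔ (∃ P : ∀ i : Fin k, G.Walk (s i) (t i),
        (∀ i, (P i).IsPath) ∧
        ∀ i j, i ≠ j → ∀ e, e ∈ (P i).edges → e ∉ (P j).edges) := by
  constructor
  · rintro ⟨B, hB⟩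
    exact forward_direction B hB
  · rintro ⟨P, hP, hdisj⟩
    exact ⟨stratB P hdisj, stratB_valid hP⟩
end
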